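/- Fix an integer K > 2 and r₁ ∈ (0,1). For every r ∈ R_K(r₁), one has the strict lower bound p(r) > 2r₁/(2r₁ + 1). -/

import Mathlib

/-- For `K > 2` and `r ∈ R_K(r₁)`, one has the strict lower bound
`p(r) > 2r₁/(2r₁+1)` (names indexed by `0, …, K-1`, with `n₁` corresponding to index `0`). -/
theorem p_gt_lower_bound
    (K : ℕ) (hK : 2 < K) (r1 : ℝ) (hr1 : r1 ∈ Set.Ioo (0 : ℝ) 1)
    (r : ℕ → ℝ)
    (hr : ∀ k < K, r k ∈ Set.Ioo (0 : ℝ) 1)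
    (hsum : ∑ k ∈ Finset.range K, r k = 1)
    (hmono : ∀ i j, 1 ≤ i → i ≤ j → j < K → r j ≤ r i)
    (hfirst : r 0 = r1) :
    2 * r1 / (2 * r1 + 1) < 2 / (3 + ∑ k ∈ Finset.Ico 1 K, r k / (1 - r k)) := by
  obtain ⟨hr1pos, hr1lt⟩ := hr1
  set S := ∑ k ∈ Finset.Ico 1 K, r k / (1 - r k) with hS
  have hSnonneg : 0 ≤ S := by
    apply Finset.sum_nonneg
    intro k hk
    rw [Finset.mem_Ico] at hk
    obtain ⟨h0, h1⟩ := hr k hk.2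
    exact div_nonneg h0.le (by linarith)
  -- sum over Ico 1 K of r = 1 - r1
  have hsum1 : ∑ k ∈ Finset.Ico 1 K, r k = 1 - r1 := by
    have := Finset.sum_Ico_eq_sub r (Nat.one_le_iff_ne_zero.mpr (by omega) : 1 ≤ K)
    simp [this, hsum, Finset.sum_range_one, hfirst]
  -- key: r1 * S < 1 - r1
  have hkey : r1 * S < 1 - r1 := by
    rw [← hsum1, hS, Finset.mul_sum]
    apply Finset.sum_lt_sum_of_nonempty
    · exact ⟨1, by simp [Finset.mem_Ico]; omega⟩
    · intro k hk
      rw [Finset.mem_Ico] at hk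
      obtain ⟨hk0, hkK⟩ := hr k hk.2
      -- need r1 < 1 - r k, i.e. r 0 + r k < 1
      have hone : 1 - r k > 0 := by linarith
      have hlt : r 0 + r k < 1 := by
        set j : ℕ := if k = 1 then 2 else 1 with hj
        have hjne0 : j ≠ 0 := by rw [hj]; split <;> omega
        have hjnek : j ≠ k := by rw [hj]; split <;> omega
        have hjK : j < K := by rw [hj]; split <;> omega
        have hsub : ({0, k} : Finset ℕ) ⊆ Finset.range K := by
          intro x hx
          simp only [Finset.mem_insert, Finset.mem_singleton] at hx
          rcases hx with rfl | rfl
          · exact Finset.mem_range.mpr (by omega)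
          · exact Finset.mem_range.mpr hk.2
        have hlt' : ∑ x ∈ ({0, k} : Finset ℕ), r x < ∑ x ∈ Finset.range K, r x := by
          apply Finset.sum_lt_sum_of_subset hsub (i := j)
          · exact Finset.mem_range.mpr hjK
          · simp [hjne0, hjnek]
          · exact (hr j hjK).1
          · intro x hx _
            exact le_of_lt (hr x (Finset.mem_range.mp hx)).1
        have hne : (0 : ℕ) ∉ ({k} : Finset ℕ) := by simp [Ne.symm (by omega : k ≠ 0)]
        rw [Finset.sum_insert hne, Finset.sum_singleton, hsum] at hlt'
        exact hlt'
      rw [hfirst] at hlt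
      have : r1 < 1 - r k := by linarith
      calc r1 * (r k / (1 - r k)) < (1 - r k) * (r k / (1 - r k)) := by
            apply mul_lt_mul_of_pos_right this
            positivity
        _ = r k := by field_simp
  -- conclude via cross multiplication
  have hden1 : (0 : ℝ) < 2 * r1 + 1 := by linarith
  have hden2 : (0 : ℝ) < 3 + S := by linarith
  rw [div_lt_div_iff₀ hden1 hden2]
  nlinarith [hkey, hSnonneg]
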